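/- Fix α > 0 and β ∈ (0,1/2), and let 1/z_n = 1 + α n^{-β}. Then E_{n,z_n}(L_n) ~ n^β/α and var_{n,z_n}(L_n) ~ n^{2β}/α² as n → ∞. -/

import Mathlib

open Filter Finset Real Asymptotics
open Topology

/-- Number of `k`-step SAWs weight: `(z/n)^k` times the number of walks. -/
noncomputable def sawWeight (n : ℕ) (z : ℝ) (k : ℕ) : ℝ :=
  (z / n) ^ k * ((n - 1).descFactorial k)

/-- Partition function of the variable-length SAW model on `K_n`. -/
noncomputable def sawZ (n : ℕ) (z : ℝ) : ℝ := ∑ k ∈ Finset.range n, sawWeight n z k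

/-- Probability that the walk length equals `k`. -/
noncomputable def sawProb (n : ℕ) (z : ℝ) (k : ℕ) : ℝ := sawWeight n z k / sawZ n z

/-- Mean walk length. -/
noncomputable def sawMean (n : ℕ) (z : ℝ) : ℝ := ∑ k ∈ Finset.range n, (k : ℝ) * sawProb n z k

/-- Variance of the walk length. -/
noncomputable def sawVar (n : ℕ) (z : ℝ) : ℝ :=
  (∑ k ∈ Finset.range n, (k : ℝ) ^ 2 * sawProb n z k) - (sawMean n z) ^ 2

/-- Tail distribution `P(L_n > x)` for real `x`. -/
noncomputable def sawTail (n : ℕ) (z : ℝ) (x : ℝ) : ℝ :=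
  ∑ k ∈ Finset.range n, if x < (k : ℝ) then sawProb n z k else 0

/-- Regularised incomplete gamma function at integer first argument,
    `Q(n, ν) = e^{-ν} ∑_{j<n} ν^j/j!`. -/
noncomputable def Qreg (n : ℕ) (ν : ℝ) : ℝ :=
  Real.exp (-ν) * ∑ j ∈ Finset.range n, ν ^ j / (Nat.factorial j)

/-- `H_n(ν) = Γ(n) Q(n,ν) / (ν^n e^{-ν})`. -/
noncomputable def Hfun (n : ℕ) (ν : ℝ) : ℝ :=
  Real.Gamma n * Qreg n ν / (ν ^ n * Real.exp (-ν))

/-- Standard normal density. -/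
noncomputable def normpdf (x : ℝ) : ℝ := Real.exp (-x ^ 2 / 2) / Real.sqrt (2 * Real.pi)

/-- Standard normal tail distribution `Φ̄`. -/
noncomputable def normTail (x : ℝ) : ℝ := ∫ t in Set.Ioi x, normpdf t

/-- `η(λ) = sgn(λ-1) √(2(λ-1-log λ))`. -/
noncomputable def etaF (l : ℝ) : ℝ := Real.sign (l - 1) * Real.sqrt (2 * (l - 1 - Real.log l))

/-- `Γ*(n) = √(n/(2π)) e^n n^{-n} Γ(n)`. -/
noncomputable def gammaStar (n : ℕ) : ℝ :=
  Real.sqrt (n / (2 * Real.pi)) * Real.exp n * ((n : ℝ) ^ n)⁻¹ * Real.Gamma n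

/-- The operator `(ν d/dν)^l`. -/
noncomputable def thetaOp : ℕ → (ℝ → ℝ) → (ℝ → ℝ)
  | 0, f => f
  | (l + 1), f => fun ν => ν * deriv (thetaOp l f) ν


noncomputable def Tmom (m n : ℕ) (z : ℝ) : ℝ := ∑ k ∈ Finset.range n, (k:ℝ)^m * sawWeight n z k

/-- Lower bound on the descending factorial. -/
lemma descFac_lower (n : ℕ) : ∀ k : ℕ, k < n →
    (n:ℝ)^k * ((n:ℝ) - (k:ℝ)^2) ≤ ((n-1).descFactorial k : ℝ) * n := by
  intro k
  induction k with
  | zero => intro hk; simp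
  | succ k ih =>
    intro hk
    have hk' : k < n := by omega
    have IH := ih hk'
    have h1 : ((n-1).descFactorial (k+1) : ℝ) = ((n:ℝ) - 1 - k) * ((n-1).descFactorial k : ℝ) := by
      rw [Nat.descFactorial_succ]
      have h2 : k ≤ n - 1 := by omega
      have h3 : 1 ≤ n := by omega
      push_cast [Nat.cast_sub h2, Nat.cast_sub h3]
      ring
    have hN : (0:ℝ) < n := by exact_mod_cast (by omega : 0 < n)
    have hKN : (k:ℝ) + 2 ≤ n := by exact_mod_cast hk
    have hK : (0:ℝ) ≤ k := Nat.cast_nonneg k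
    have hP : (0:ℝ) ≤ (n:ℝ)^k := by positivity
    have hmul := mul_le_mul_of_nonneg_left IH (show (0:ℝ) ≤ (n:ℝ) - 1 - k by linarith)
    rw [h1, pow_succ]
    push_cast
    nlinarith [mul_nonneg (mul_nonneg hK hK) hP, mul_nonneg hK hP,
      mul_nonneg (mul_nonneg (mul_nonneg hK hK) hK) hP,
      mul_nonneg (mul_nonneg hK (le_of_lt hN)) hP]

lemma weight_le {n k : ℕ} {z : ℝ} (hz : 0 ≤ z) (hn : 1 ≤ n) : sawWeight n z k ≤ z^k := by
  have hN : (0:ℝ) < n := by exact_mod_cast hn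
  have hD : ((n-1).descFactorial k : ℝ) ≤ (n:ℝ)^k := by
    calc ((n-1).descFactorial k : ℝ) ≤ ((n-1:ℕ):ℝ)^k := by
          exact_mod_cast Nat.descFactorial_le_pow (n-1) k
    _ ≤ (n:ℝ)^k := by
          apply pow_le_pow_left₀ (by positivity)
          exact_mod_cast Nat.sub_le n 1
  rw [sawWeight, div_pow]
  rw [div_mul_eq_mul_div, div_le_iff₀ (by positivity)]
  exact mul_le_mul_of_nonneg_left hD (by positivity)

lemma le_weight {n k : ℕ} {z : ℝ} (hz : 0 ≤ z) (hk : k < n) :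
    z^k * (1 - (k:ℝ)^2/(n:ℝ)) ≤ sawWeight n z k := by
  have hN : (0:ℝ) < n := by exact_mod_cast (by omega : 0 < n)
  have key := descFac_lower n k hk
  have h2 : (1 - (k:ℝ)^2/(n:ℝ)) * (n:ℝ)^k ≤ ((n-1).descFactorial k : ℝ) := by
    rw [← mul_le_mul_iff_of_pos_right hN]
    calc (1 - (k:ℝ)^2/(n:ℝ)) * (n:ℝ)^k * n = (n:ℝ)^k * ((n:ℝ) - (k:ℝ)^2) := by
          field_simp
    _ ≤ ((n-1).descFactorial k : ℝ) * n := key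
  rw [sawWeight, div_pow]
  have hzn : (0:ℝ) ≤ z^k / (n:ℝ)^k := by positivity
  calc z^k * (1 - (k:ℝ)^2/(n:ℝ)) = z^k / (n:ℝ)^k * ((1 - (k:ℝ)^2/(n:ℝ)) * (n:ℝ)^k) := by
        field_simp
  _ ≤ z^k / (n:ℝ)^k * ((n-1).descFactorial k : ℝ) := mul_le_mul_of_nonneg_left h2 hzn

lemma crude (j k : ℕ) {q : ℝ} (hq : 0 < q) (hq2 : q ≤ 1/2) :
    (k:ℝ)^j * (1-q)^k ≤ (j.factorial : ℝ) * (2/q)^j * Real.exp (-(q*k)/2) := by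
  have e1 : (1-q)^k ≤ Real.exp (-(q*k)) := by
    have h := Real.add_one_le_exp (-q)
    calc (1-q)^k ≤ (Real.exp (-q))^k := pow_le_pow_left₀ (by linarith) (by linarith) k
    _ = Real.exp (-(q*k)) := by rw [← Real.exp_nat_mul]; congr 1; ring
  have e2 : (k:ℝ)^j ≤ (j.factorial : ℝ) * (2/q)^j * Real.exp (q*k/2) := by
    have hx : (0:ℝ) ≤ q*k/2 := by positivity
    have hpow : (q*(k:ℝ)/2)^j / (j.factorial:ℝ) ≤ Real.exp (q*k/2) := by
      calc (q*(k:ℝ)/2)^j / (j.factorial:ℝ)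
          ≤ ∑ i ∈ range (j+1), (q*(k:ℝ)/2)^i / (i.factorial:ℝ) := by
            apply Finset.single_le_sum (f := fun i => (q*(k:ℝ)/2)^i / (i.factorial:ℝ))
              (fun i _ => by positivity) (self_mem_range_succ j)
      _ ≤ Real.exp (q*k/2) := Real.sum_le_exp_of_nonneg hx _
    have hid : (k:ℝ)^j = (2/q)^j * (q*(k:ℝ)/2)^j := by
      rw [← mul_pow]; congr 1; field_simp
    rw [hid]
    have := mul_le_mul_of_nonneg_left
      ((div_le_iff₀ (by positivity : (0:ℝ) < (j.factorial:ℝ))).mp hpow)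
      (show (0:ℝ) ≤ (2/q)^j by positivity)
    calc (2/q)^j * (q*(k:ℝ)/2)^j ≤ (2/q)^j * (Real.exp (q*k/2) * (j.factorial:ℝ)) := this
    _ = (j.factorial : ℝ) * (2/q)^j * Real.exp (q*k/2) := by ring
  calc (k:ℝ)^j * (1-q)^k ≤ ((j.factorial : ℝ) * (2/q)^j * Real.exp (q*k/2)) * Real.exp (-(q*k)) := by
        exact mul_le_mul e2 e1 (pow_nonneg (by linarith) k) (by positivity)
  _ = (j.factorial : ℝ) * (2/q)^j * Real.exp (-(q*k)/2) := by
        rw [mul_assoc, ← Real.exp_add]; congr 2; ring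

lemma exp_ratio_lt {q : ℝ} (hq : 0 < q) : Real.exp (-q/2) < 1 :=
  Real.exp_lt_one_iff.mpr (by linarith)

lemma one_sub_exp_ge {q : ℝ} (hq : 0 < q) (hq2 : q ≤ 1/2) : q/4 ≤ 1 - Real.exp (-q/2) := by
  have hpos : (0:ℝ) < 1 + q/2 := by linarith
  have h : 1 + q/2 ≤ Real.exp (q/2) := by
    have := Real.add_one_le_exp (q/2); linarith
  have h2 : Real.exp (-q/2) ≤ (1+q/2)⁻¹ := by
    rw [show -q/2 = -(q/2) by ring, Real.exp_neg]
    exact inv_anti₀ hpos h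
  have h3 : 1 - (1+q/2)⁻¹ = (q/2)/(1+q/2) := by field_simp; ring
  have h4 : q/4 ≤ (q/2)/(1+q/2) := by
    rw [le_div_iff₀ hpos]; nlinarith
  linarith

lemma inv_one_sub_exp_le {q : ℝ} (hq : 0 < q) (hq2 : q ≤ 1/2) :
    (1 - Real.exp (-q/2))⁻¹ ≤ 4/q := by
  have h1 := one_sub_exp_ge hq hq2
  have h2 : (0:ℝ) < q/4 := by linarith
  calc (1 - Real.exp (-q/2))⁻¹ ≤ (q/4)⁻¹ := inv_anti₀ h2 h1
  _ = 4/q := by field_simp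

lemma exp_eq_pow {q : ℝ} (k : ℕ) : Real.exp (-(q*(k:ℝ))/2) = (Real.exp (-q/2))^k := by
  rw [← Real.exp_nat_mul]; congr 1; ring

lemma sum_exp_le {q : ℝ} (hq : 0 < q) (hq2 : q ≤ 1/2) (n : ℕ) :
    ∑ k ∈ range n, Real.exp (-(q*(k:ℝ))/2) ≤ 4/q := by
  have h0 := hasSum_geometric_of_lt_one (le_of_lt (Real.exp_pos (-q/2))) (exp_ratio_lt hq)
  have h1 : ∑ k ∈ range n, Real.exp (-(q*(k:ℝ))/2) ≤ (1 - Real.exp (-q/2))⁻¹ := by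
    simp_rw [exp_eq_pow]
    exact sum_le_hasSum _ (fun i _ => by positivity) h0
  exact h1.trans (inv_one_sub_exp_le hq hq2)

lemma hasSum_exp_shift {q : ℝ} (hq : 0 < q) (n : ℕ) :
    HasSum (fun i : ℕ => Real.exp (-(q*((n:ℝ)+(i:ℝ)))/2))
      (Real.exp (-(q*(n:ℝ))/2) * (1 - Real.exp (-q/2))⁻¹) := by
  have h0 := hasSum_geometric_of_lt_one (le_of_lt (Real.exp_pos (-q/2))) (exp_ratio_lt hq)
  have h1 := h0.mul_left (Real.exp (-(q*(n:ℝ))/2))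
  have h2 : (fun i : ℕ => Real.exp (-(q*((n:ℝ)+(i:ℝ)))/2))
      = fun i : ℕ => Real.exp (-(q*(n:ℝ))/2) * (Real.exp (-q/2))^i := by
    funext i
    rw [← Real.exp_nat_mul, ← Real.exp_add]; congr 1; ring
  rw [h2]; exact h1

lemma tsum_exp_shift_le {q : ℝ} (hq : 0 < q) (hq2 : q ≤ 1/2) (n : ℕ) :
    ∑' i : ℕ, Real.exp (-(q*((n:ℝ)+(i:ℝ)))/2) ≤ Real.exp (-(q*(n:ℝ))/2) * (4/q) := by
  rw [(hasSum_exp_shift hq n).tsum_eq]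
  exact mul_le_mul_of_nonneg_left (inv_one_sub_exp_le hq hq2) (by positivity)

/-- Exact values of geometric moment sums, m = 0,1,2. -/
lemma hasSum_M0 {z : ℝ} (h0 : 0 ≤ z) (h1 : z < 1) :
    HasSum (fun k : ℕ => (k:ℝ)^0 * z^k) (1/(1-z)) := by
  simpa [one_div] using hasSum_geometric_of_lt_one h0 h1

lemma hasSum_M1 {z : ℝ} (h0 : 0 ≤ z) (h1 : z < 1) :
    HasSum (fun k : ℕ => (k:ℝ)^1 * z^k) (z/(1-z)^2) := by
  have := hasSum_coe_mul_geometric_of_norm_lt_one (𝕜 := ℝ)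
    (r := z) (by rw [Real.norm_eq_abs, abs_of_nonneg h0]; exact h1)
  simpa using this

lemma hasSum_M2 {z : ℝ} (h0 : 0 ≤ z) (h1 : z < 1) :
    HasSum (fun k : ℕ => (k:ℝ)^2 * z^k) (2/(1-z)^3 - 3/(1-z)^2 + 1/(1-z)) := by
  have hz : ‖z‖ < 1 := by rw [Real.norm_eq_abs, abs_of_nonneg h0]; exact h1
  have h2 := (hasSum_choose_mul_geometric_of_norm_lt_one (𝕜 := ℝ) 2 hz).mul_left 2
  have hc1 := (hasSum_choose_mul_geometric_of_norm_lt_one (𝕜 := ℝ) 1 hz).mul_left 3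
  have hg := hasSum_geometric_of_lt_one h0 h1
  have H := (h2.sub hc1).add hg
  have hval : 2 * (1/(1-z)^(2+1)) - 3 * (1/(1-z)^(1+1)) + (1-z)⁻¹
      = 2/(1-z)^3 - 3/(1-z)^2 + 1/(1-z) := by
    rw [inv_eq_one_div]; norm_num [div_eq_mul_inv]
  rw [hval] at H
  have hfun : (fun b : ℕ => 2 * (((b + 2).choose 2 : ℝ) * z ^ b)
      - 3 * (((b + 1).choose 1 : ℝ) * z ^ b) + z ^ b) = fun k : ℕ => (k:ℝ)^2 * z^k := by
    funext b
    have hnat : (b+2).choose 2 * 2 = (b+2)*(b+1) := by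
      rw [Nat.choose_two_right]
      have hdvd : 2 ∣ (b+2)*((b+2)-1) := by
        have := (Nat.even_mul_succ_self (b+1)).two_dvd
        simpa [Nat.mul_comm] using this
      rw [Nat.div_mul_cancel hdvd]
      simp
    have hcast : ((b+2).choose 2 : ℝ) * 2 = ((b:ℝ)+2)*((b:ℝ)+1) := by
      exact_mod_cast congrArg (Nat.cast (R := ℝ)) hnat
    have hc1 : ((b+1).choose 1 : ℝ) = (b:ℝ)+1 := by
      simp
    rw [hc1]
    linear_combination z^b * hcast
  rw [hfun] at H
  exact H

lemma norm_z_lt {z : ℝ} (h0 : 0 ≤ z) (h1 : z < 1) : ‖z‖ < 1 := by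
  rw [Real.norm_eq_abs, abs_of_nonneg h0]; exact h1

lemma Tmom_upper {n m : ℕ} {z : ℝ} (h0 : 0 ≤ z) (h1 : z < 1) (hn : 1 ≤ n) :
    Tmom m n z ≤ ∑' k : ℕ, (k:ℝ)^m * z^k := by
  have hsum : Summable (fun k : ℕ => (k:ℝ)^m * z^k) :=
    summable_pow_mul_geometric_of_norm_lt_one m (norm_z_lt h0 h1)
  calc Tmom m n z ≤ ∑ k ∈ range n, (k:ℝ)^m * z^k := by
        apply Finset.sum_le_sum
        intro k _
        exact mul_le_mul_of_nonneg_left (weight_le h0 hn) (by positivity)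
  _ ≤ ∑' k : ℕ, (k:ℝ)^m * z^k := Summable.sum_le_tsum _ (fun k _ => by positivity) hsum

lemma Tmom_lower {n m : ℕ} {z : ℝ} (h0 : 0 < z) (h1 : z < 1) (hq2 : 1 - z ≤ 1/2) (hn : 1 ≤ n) :
    (∑' k : ℕ, (k:ℝ)^m * z^k)
      - (m.factorial:ℝ)*(2/(1-z))^m*(Real.exp (-((1-z)*(n:ℝ))/2) * (4/(1-z)))
      - ((m+2).factorial:ℝ)*(2/(1-z))^(m+2)*(4/(1-z))/(n:ℝ) ≤ Tmom m n z := by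
  set q := 1 - z with hq_def
  have hq : 0 < q := by simp only [hq_def]; linarith
  have hz1 : z = 1 - q := by simp [hq_def]
  have hn0 : (0:ℝ) < n := by exact_mod_cast hn
  have hsum : Summable (fun k : ℕ => (k:ℝ)^m * z^k) :=
    summable_pow_mul_geometric_of_norm_lt_one m (norm_z_lt h0.le h1)
  -- step 1 : termwise lower bound
  have step1 : ∑ k ∈ range n, ((k:ℝ)^m * z^k - (k:ℝ)^(m+2) * z^k / n) ≤ Tmom m n z := by
    apply Finset.sum_le_sum
    intro k hk
    have hkn := Finset.mem_range.mp hk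
    have h := mul_le_mul_of_nonneg_left (le_weight h0.le hkn)
      (show (0:ℝ) ≤ (k:ℝ)^m by positivity)
    calc (k:ℝ)^m * z^k - (k:ℝ)^(m+2) * z^k / n
        = (k:ℝ)^m * (z^k * (1 - (k:ℝ)^2/(n:ℝ))) := by field_simp; ring
    _ ≤ (k:ℝ)^m * sawWeight n z k := h
  -- step 2 : finite sum of the geometric moment vs tsum
  have step2 := Summable.sum_add_tsum_nat_add (f := fun k : ℕ => (k:ℝ)^m * z^k) n hsum
  -- step 3 : tail bound
  have step3 : ∑' i : ℕ, ((i+n:ℕ):ℝ)^m * z^(i+n)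
      ≤ (m.factorial:ℝ)*(2/q)^m*(Real.exp (-(q*(n:ℝ))/2) * (4/q)) := by
    have hsl : Summable (fun i : ℕ => ((i+n:ℕ):ℝ)^m * z^(i+n)) := by
      exact_mod_cast (summable_nat_add_iff (f := fun k : ℕ => (k:ℝ)^m * z^k) n).mpr hsum
    have hsr : Summable (fun i : ℕ =>
        (m.factorial:ℝ)*(2/q)^m * Real.exp (-(q*((n:ℝ)+(i:ℝ)))/2)) :=
      ((hasSum_exp_shift hq n).summable).mul_left _
    have hterm : ∀ i : ℕ, ((i+n:ℕ):ℝ)^m * z^(i+n)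
        ≤ (m.factorial:ℝ)*(2/q)^m * Real.exp (-(q*((n:ℝ)+(i:ℝ)))/2) := by
      intro i
      have := crude m (i+n) hq hq2
      rw [← hz1] at this
      calc ((i+n:ℕ):ℝ)^m * z^(i+n)
          ≤ (m.factorial:ℝ)*(2/q)^m * Real.exp (-(q*((i+n:ℕ):ℝ))/2) := this
      _ = (m.factorial:ℝ)*(2/q)^m * Real.exp (-(q*((n:ℝ)+(i:ℝ)))/2) := by
            congr 2; push_cast; ring
    calc ∑' i : ℕ, ((i+n:ℕ):ℝ)^m * z^(i+n)
        ≤ ∑' i : ℕ, (m.factorial:ℝ)*(2/q)^m * Real.exp (-(q*((n:ℝ)+(i:ℝ)))/2) :=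
          Summable.tsum_le_tsum hterm hsl hsr
    _ = (m.factorial:ℝ)*(2/q)^m * ∑' i : ℕ, Real.exp (-(q*((n:ℝ)+(i:ℝ)))/2) := tsum_mul_left
    _ ≤ (m.factorial:ℝ)*(2/q)^m*(Real.exp (-(q*(n:ℝ))/2) * (4/q)) := by
          exact mul_le_mul_of_nonneg_left (tsum_exp_shift_le hq hq2 n) (by positivity)
  -- step 4 : error sum bound
  have step4 : ∑ k ∈ range n, (k:ℝ)^(m+2) * z^k
      ≤ ((m+2).factorial:ℝ)*(2/q)^(m+2)*(4/q) := by
    calc ∑ k ∈ range n, (k:ℝ)^(m+2) * z^k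
        ≤ ∑ k ∈ range n, ((m+2).factorial:ℝ)*(2/q)^(m+2) * Real.exp (-(q*(k:ℝ))/2) := by
          apply Finset.sum_le_sum
          intro k _
          have := crude (m+2) k hq hq2
          rwa [← hz1] at this
    _ = ((m+2).factorial:ℝ)*(2/q)^(m+2) * ∑ k ∈ range n, Real.exp (-(q*(k:ℝ))/2) := by
          rw [Finset.mul_sum]
    _ ≤ ((m+2).factorial:ℝ)*(2/q)^(m+2)*(4/q) :=
          mul_le_mul_of_nonneg_left (sum_exp_le hq hq2 n) (by positivity)
  -- assemble
  have e1 : ∑ k ∈ range n, ((k:ℝ)^m * z^k - (k:ℝ)^(m+2) * z^k / n)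
      = ∑ k ∈ range n, (k:ℝ)^m * z^k - (∑ k ∈ range n, (k:ℝ)^(m+2) * z^k)/n := by
    rw [Finset.sum_sub_distrib, Finset.sum_div]
  have e2 : (∑ k ∈ range n, (k:ℝ)^(m+2) * z^k)/n ≤ (((m+2).factorial:ℝ)*(2/q)^(m+2)*(4/q))/n :=
    (div_le_div_iff_of_pos_right hn0).mpr step4
  have e3 : ∑ k ∈ range n, (k:ℝ)^m * z^k
      = (∑' k : ℕ, (k:ℝ)^m * z^k) - ∑' i : ℕ, ((i+n:ℕ):ℝ)^m * z^(i+n) := by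
    have : ∑' i : ℕ, ((i+n:ℕ):ℝ)^m * z^(i+n) = ∑' i : ℕ, ((fun k : ℕ => (k:ℝ)^m * z^k) (i+n)) := by
      push_cast; rfl
    rw [this]; linarith [step2]
  rw [e1, e3] at step1
  linarith [step1, step3, e2]

lemma Tmom_zero (n : ℕ) (z : ℝ) : Tmom 0 n z = sawZ n z := by simp [Tmom, sawZ]

lemma sawMean_eq (n : ℕ) (z : ℝ) : sawMean n z = Tmom 1 n z / sawZ n z := by
  simp only [sawMean, sawProb, Tmom, pow_one]
  rw [show (∑ x ∈ Finset.range n, (x:ℝ) * (sawWeight n z x / sawZ n z))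
      = ∑ x ∈ Finset.range n, ((x:ℝ) * sawWeight n z x) / sawZ n z from
    Finset.sum_congr rfl (fun k _ => by ring), ← Finset.sum_div]

lemma sawVar_eq (n : ℕ) (z : ℝ) :
    sawVar n z = Tmom 2 n z / sawZ n z - (Tmom 1 n z / sawZ n z)^2 := by
  rw [sawVar, sawMean_eq]
  congr 1
  simp only [sawProb, Tmom]
  rw [show (∑ x ∈ Finset.range n, (x:ℝ)^2 * (sawWeight n z x / sawZ n z))
      = ∑ x ∈ Finset.range n, ((x:ℝ)^2 * sawWeight n z x) / sawZ n z from
    Finset.sum_congr rfl (fun k _ => by ring), ← Finset.sum_div]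

lemma sawWeight_nonneg {n k : ℕ} {z : ℝ} (hz : 0 ≤ z) : 0 ≤ sawWeight n z k := by
  rw [sawWeight]; positivity

lemma sawZ_ge_one {n : ℕ} {z : ℝ} (hz : 0 ≤ z) (hn : 1 ≤ n) : 1 ≤ sawZ n z := by
  have h0 : sawWeight n z 0 = 1 := by simp [sawWeight]
  calc (1:ℝ) = sawWeight n z 0 := h0.symm
  _ ≤ ∑ k ∈ Finset.range n, sawWeight n z k :=
      Finset.single_le_sum (f := fun k => sawWeight n z k)
        (fun k _ => sawWeight_nonneg hz) (Finset.mem_range.mpr hn)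

lemma q_facts {u : ℝ} (hu0 : 0 < u) (hu1 : u ≤ 1) :
    0 < 1/(1+u) ∧ 1/(1+u) < 1 ∧ 1 - 1/(1+u) = u/(1+u) ∧ 0 < 1 - 1/(1+u) ∧
      1 - 1/(1+u) ≤ 1/2 ∧ u/2 ≤ 1 - 1/(1+u) := by
  have h1 : (0:ℝ) < 1 + u := by linarith
  have hq : 1 - 1/(1+u) = u/(1+u) := by field_simp; ring
  refine ⟨by positivity, ?_, hq, ?_, ?_, ?_⟩
  · rw [div_lt_one h1]; linarith
  · rw [hq]; positivity
  · rw [hq, div_le_iff₀ h1]; nlinarith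
  · rw [hq, div_le_div_iff₀ (by norm_num : (0:ℝ) < 2) h1]; nlinarith

lemma expand_id (m : ℕ) {q nr : ℝ} (hq : q ≠ 0) (hn : nr ≠ 0) (M E F G : ℝ) :
    (M - F*(2/q)^m*(E*(4/q)) - G*(2/q)^(m+2)*(4/q)/nr) * q^(m+1)
      = M*q^(m+1) - F*2^m*4*E - G*2^(m+2)*4/(q^2*nr) := by
  rw [div_pow, div_pow]
  field_simp
  ring

noncomputable def zseq (α β : ℝ) (n : ℕ) : ℝ := 1/(1 + α*(n:ℝ)^(-β))
noncomputable def qseq (α β : ℝ) (n : ℕ) : ℝ := 1 - zseq α β n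

variable {α β : ℝ}

lemma u_tendsto (α : ℝ) (hβ1 : 0 < β) : Tendsto (fun n : ℕ => α * (n:ℝ)^(-β)) atTop (𝓝 0) := by
  have h := (tendsto_rpow_neg_atTop hβ1).comp (tendsto_natCast_atTop_atTop (R := ℝ))
  simpa using h.const_mul α

lemma ev_basic (hα : 0 < α) (hβ1 : 0 < β) : ∀ᶠ n : ℕ in atTop,
    1 ≤ n ∧ 0 < α*(n:ℝ)^(-β) ∧ α*(n:ℝ)^(-β) ≤ 1 := by
  filter_upwards [eventually_ge_atTop 1,
    (u_tendsto α hβ1).eventually_lt_const (by norm_num : (0:ℝ) < 1)] with n hn hlt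
  have hn0 : (0:ℝ) < n := by exact_mod_cast hn
  exact ⟨hn, by positivity, hlt.le⟩

lemma z_tendsto (hβ1 : 0 < β) : Tendsto (zseq α β) atTop (𝓝 1) := by
  have h : Tendsto (fun n : ℕ => 1 + α*(n:ℝ)^(-β)) atTop (𝓝 1) := by
    simpa using (u_tendsto α hβ1).const_add 1
  have := h.inv₀ one_ne_zero
  rw [show (1:ℝ) = 1⁻¹ by norm_num]
  exact this.congr (fun n => by simp [zseq])

lemma q_tendsto (hβ1 : 0 < β) : Tendsto (qseq α β) atTop (𝓝 0) := by
  have := (z_tendsto (α := α) hβ1).const_sub 1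
  simp only [sub_self] at this; exact this

lemma qn_atTop (hα : 0 < α) (hβ1 : 0 < β) (hβ2 : β < 1/2) :
    Tendsto (fun n : ℕ => qseq α β n * n) atTop atTop := by
  have hb : Tendsto (fun n : ℕ => (α/2)*(n:ℝ)^(1-β)) atTop atTop :=
    ((tendsto_rpow_atTop (by linarith)).comp (tendsto_natCast_atTop_atTop (R := ℝ))).const_mul_atTop
      (by positivity)
  apply tendsto_atTop_mono' atTop ?_ hb
  filter_upwards [ev_basic hα hβ1] with n ⟨hn, hu0, hu1⟩
  have hn0 : (0:ℝ) < n := by exact_mod_cast hn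
  obtain ⟨-, -, hq, -, -, hq5⟩ := q_facts hu0 hu1
  have h1 : (α/2)*(n:ℝ)^(1-β) = (α*(n:ℝ)^(-β)/2) * n := by
    rw [show (1:ℝ)-β = -β + 1 from by ring, Real.rpow_add hn0, Real.rpow_one]; ring
  rw [h1]
  have : α*(n:ℝ)^(-β)/2 ≤ qseq α β n := by
    rw [qseq, zseq]; exact hq5
  exact mul_le_mul_of_nonneg_right this hn0.le

lemma q2n_atTop (hα : 0 < α) (hβ1 : 0 < β) (hβ2 : β < 1/2) :
    Tendsto (fun n : ℕ => (qseq α β n)^2 * n) atTop atTop := by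
  have hb : Tendsto (fun n : ℕ => (α^2/4)*(n:ℝ)^(1-2*β)) atTop atTop :=
    ((tendsto_rpow_atTop (by linarith)).comp (tendsto_natCast_atTop_atTop (R := ℝ))).const_mul_atTop
      (by positivity)
  apply tendsto_atTop_mono' atTop ?_ hb
  filter_upwards [ev_basic hα hβ1] with n ⟨hn, hu0, hu1⟩
  have hn0 : (0:ℝ) < n := by exact_mod_cast hn
  obtain ⟨-, -, hq, hq4, -, hq5⟩ := q_facts hu0 hu1
  have h1 : (α^2/4)*(n:ℝ)^(1-2*β) = (α*(n:ℝ)^(-β)/2)^2 * n := by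
    rw [show (1:ℝ)-2*β = -β + (-β + 1) from by ring, Real.rpow_add hn0, Real.rpow_add hn0,
      Real.rpow_one]
    ring
  rw [h1]
  have h2 : α*(n:ℝ)^(-β)/2 ≤ qseq α β n := by rw [qseq, zseq]; exact hq5
  have h3 : (α*(n:ℝ)^(-β)/2)^2 ≤ (qseq α β n)^2 := by
    apply pow_le_pow_left₀ (by positivity) h2
  exact mul_le_mul_of_nonneg_right h3 hn0.le

lemma exp_qn_tendsto (hα : 0 < α) (hβ1 : 0 < β) (hβ2 : β < 1/2) :
    Tendsto (fun n : ℕ => Real.exp (-(qseq α β n * n)/2)) atTop (𝓝 0) := by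
  have h1 : Tendsto (fun n : ℕ => qseq α β n * n / 2) atTop atTop :=
    (qn_atTop hα hβ1 hβ2).atTop_div_const (by norm_num)
  have h2 : Tendsto (fun n : ℕ => -(qseq α β n * n / 2)) atTop atBot :=
    tendsto_neg_atBot_iff.mpr h1
  exact (Real.tendsto_exp_atBot.comp h2).congr (fun n => by simp [Function.comp, neg_div])

lemma inv_q2n_tendsto (hα : 0 < α) (hβ1 : 0 < β) (hβ2 : β < 1/2) (C : ℝ) :
    Tendsto (fun n : ℕ => C / ((qseq α β n)^2 * n)) atTop (𝓝 0) := by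
  have h := (q2n_atTop hα hβ1 hβ2).inv_tendsto_atTop
  have := h.const_mul C
  simpa [div_eq_mul_inv] using this

lemma key_squeeze (hα : 0 < α) (hβ1 : 0 < β) (hβ2 : β < 1/2) (m : ℕ) (V : ℝ → ℝ) (c : ℝ)
    (hV : ∀ z : ℝ, 0 < z → z < 1 → HasSum (fun k : ℕ => (k:ℝ)^m * z^k) (V z))
    (hVc : Tendsto (fun n : ℕ => V (zseq α β n) * (qseq α β n)^(m+1)) atTop (𝓝 c)) :
    Tendsto (fun n : ℕ => Tmom m n (zseq α β n) * (qseq α β n)^(m+1)) atTop (𝓝 c) := by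
  have t1 : Tendsto (fun n : ℕ =>
      ((m.factorial:ℝ)*2^m*4) * Real.exp (-(qseq α β n * n)/2)) atTop (𝓝 0) := by
    simpa using (exp_qn_tendsto hα hβ1 hβ2).const_mul ((m.factorial:ℝ)*2^m*4)
  have t2 := inv_q2n_tendsto (α := α) (β := β) hα hβ1 hβ2 (((m+2).factorial:ℝ)*2^(m+2)*4)
  have glim : Tendsto (fun n : ℕ => V (zseq α β n) * (qseq α β n)^(m+1)
      - ((m.factorial:ℝ)*2^m*4) * Real.exp (-(qseq α β n * n)/2)
      - (((m+2).factorial:ℝ)*2^(m+2)*4) / ((qseq α β n)^2 * n)) atTop (𝓝 c) := by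
    have := (hVc.sub t1).sub t2
    simpa [sq] using this
  apply tendsto_of_tendsto_of_tendsto_of_le_of_le' glim hVc
  · -- lower bound
    filter_upwards [ev_basic hα hβ1] with n ⟨hn, hu0, hu1⟩
    have hn0 : (0:ℝ) < n := by exact_mod_cast hn
    obtain ⟨hz0, hz1, hqeq, hq0, hqhalf, -⟩ := q_facts hu0 hu1
    have hz0' : 0 < zseq α β n := hz0
    have hz1' : zseq α β n < 1 := hz1
    have hq0' : 0 < qseq α β n := hq0
    have hqh' : qseq α β n ≤ 1/2 := hqhalf
    have L := Tmom_lower (n := n) (m := m) hz0' hz1' (by rw [show 1 - zseq α β n = qseq α β n from rfl]; exact hqh') hn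
    have L' := mul_le_mul_of_nonneg_right L (pow_nonneg hq0'.le (m+1))
    rw [show (1 - zseq α β n) = qseq α β n from rfl] at L'
    rw [(hV _ hz0' hz1').tsum_eq] at L'
    rw [expand_id m (ne_of_gt hq0') (ne_of_gt hn0)] at L'
    exact L'
  · -- upper bound
    filter_upwards [ev_basic hα hβ1] with n ⟨hn, hu0, hu1⟩
    obtain ⟨hz0, hz1, hqeq, hq0, hqhalf, -⟩ := q_facts hu0 hu1
    have hz0' : 0 < zseq α β n := hz0
    have hz1' : zseq α β n < 1 := hz1
    have hq0' : 0 < qseq α β n := hq0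
    have U := Tmom_upper (n := n) (m := m) hz0'.le hz1' hn
    rw [(hV _ hz0' hz1').tsum_eq] at U
    exact mul_le_mul_of_nonneg_right U (pow_nonneg hq0'.le (m+1))

lemma A0 (hα : 0 < α) (hβ1 : 0 < β) (hβ2 : β < 1/2) :
    Tendsto (fun n : ℕ => Tmom 0 n (zseq α β n) * (qseq α β n)^1) atTop (𝓝 1) := by
  apply key_squeeze hα hβ1 hβ2 0 (fun z => 1/(1-z)) 1 (fun z h0 h1 => hasSum_M0 h0.le h1)
  apply Tendsto.congr' ?_ (tendsto_const_nhds (x := (1:ℝ)))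
  filter_upwards [ev_basic hα hβ1] with n ⟨hn, hu0, hu1⟩
  obtain ⟨-, -, -, hq0, -, -⟩ := q_facts hu0 hu1
  have hq0' : (0:ℝ) < qseq α β n := hq0
  show (1:ℝ) = 1/(1 - zseq α β n) * (qseq α β n)^1
  rw [show (1 - zseq α β n) = qseq α β n from rfl]
  field_simp

lemma A1 (hα : 0 < α) (hβ1 : 0 < β) (hβ2 : β < 1/2) :
    Tendsto (fun n : ℕ => Tmom 1 n (zseq α β n) * (qseq α β n)^2) atTop (𝓝 1) := by
  apply key_squeeze hα hβ1 hβ2 1 (fun z => z/(1-z)^2) 1 (fun z h0 h1 => hasSum_M1 h0.le h1)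
  apply Tendsto.congr' ?_ (z_tendsto (α := α) hβ1)
  filter_upwards [ev_basic hα hβ1] with n ⟨hn, hu0, hu1⟩
  obtain ⟨-, -, -, hq0, -, -⟩ := q_facts hu0 hu1
  have hq0' : (0:ℝ) < qseq α β n := hq0
  show zseq α β n = zseq α β n/(1 - zseq α β n)^2 * (qseq α β n)^(1+1)
  rw [show (1 - zseq α β n) = qseq α β n from rfl]
  field_simp

lemma A2 (hα : 0 < α) (hβ1 : 0 < β) (hβ2 : β < 1/2) :
    Tendsto (fun n : ℕ => Tmom 2 n (zseq α β n) * (qseq α β n)^3) atTop (𝓝 2) := by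
  apply key_squeeze hα hβ1 hβ2 2 (fun z => 2/(1-z)^3 - 3/(1-z)^2 + 1/(1-z)) 2
    (fun z h0 h1 => hasSum_M2 h0.le h1)
  have hq := q_tendsto (α := α) (β := β) hβ1
  have base : Tendsto (fun n : ℕ => 2 - 3*(qseq α β n) + (qseq α β n)^2) atTop (𝓝 2) := by
    have := (tendsto_const_nhds (x := (2:ℝ)) (f := atTop (α := ℕ))).sub (hq.const_mul 3) |>.add (hq.mul hq)
    simpa [sq] using this
  apply Tendsto.congr' ?_ base
  filter_upwards [ev_basic hα hβ1] with n ⟨hn, hu0, hu1⟩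
  obtain ⟨-, -, -, hq0, -, -⟩ := q_facts hu0 hu1
  have hq0' : (0:ℝ) < qseq α β n := hq0
  show 2 - 3*(qseq α β n) + (qseq α β n)^2
      = (2/(1 - zseq α β n)^3 - 3/(1 - zseq α β n)^2 + 1/(1 - zseq α β n)) * (qseq α β n)^(2+1)
  rw [show (1 - zseq α β n) = qseq α β n from rfl]
  field_simp
  ring

theorem mean_var_high_temp_window (α β : ℝ) (hα : 0 < α) (hβ1 : 0 < β) (hβ2 : β < 1 / 2) :
    ((fun n : ℕ => sawMean n (1 / (1 + α * (n : ℝ) ^ (-β)))) ~[atTop]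
        (fun n : ℕ => (n : ℝ) ^ β / α))
      ∧ ((fun n : ℕ => sawVar n (1 / (1 + α * (n : ℝ) ^ (-β)))) ~[atTop]
        (fun n : ℕ => (n : ℝ) ^ (2 * β) / α ^ 2)) := by
  have hA0 := A0 (α := α) (β := β) hα hβ1 hβ2
  have hA1 := A1 (α := α) (β := β) hα hβ1 hβ2
  have hA2 := A2 (α := α) (β := β) hα hβ1 hβ2
  -- u/q → 1
  have huq : Tendsto (fun n : ℕ => (α * (n:ℝ)^(-β)) / qseq α β n) atTop (𝓝 1) := by
    have hb : Tendsto (fun n : ℕ => 1 + α * (n:ℝ)^(-β)) atTop (𝓝 1) := by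
      simpa using (u_tendsto (β := β) α hβ1).const_add 1
    apply Tendsto.congr' ?_ hb
    filter_upwards [ev_basic hα hβ1] with n ⟨hn, hu0, hu1⟩
    obtain ⟨-, -, hqeq, hq0, -, -⟩ := q_facts hu0 hu1
    have hq0' : (0:ℝ) < qseq α β n := hq0
    have h1u : (0:ℝ) < 1 + α * (n:ℝ)^(-β) := by linarith
    show 1 + α * (n:ℝ)^(-β) = (α * (n:ℝ)^(-β)) / qseq α β n
    rw [show qseq α β n = 1 - 1/(1 + α * (n:ℝ)^(-β)) from rfl, hqeq]
    field_simp
  -- eventual facts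
  have hev2 : ∀ᶠ n : ℕ in atTop, 0 < qseq α β n ∧ 1 ≤ sawZ n (zseq α β n) ∧ 1 ≤ n := by
    filter_upwards [ev_basic hα hβ1] with n ⟨hn, hu0, hu1⟩
    obtain ⟨hz0, -, -, hq0, -, -⟩ := q_facts hu0 hu1
    exact ⟨hq0, sawZ_ge_one (le_of_lt hz0) hn, hn⟩
  -- mean * u → 1
  have Hmean : Tendsto (fun n : ℕ => sawMean n (zseq α β n) * (α * (n:ℝ)^(-β))) atTop (𝓝 1) := by
    have base := ((hA1.div hA0 one_ne_zero).mul huq)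
    have : ((1:ℝ)/1) * 1 = 1 := by norm_num
    rw [this] at base
    apply Tendsto.congr' ?_ base
    filter_upwards [hev2] with n ⟨hq0, hZ1, hn⟩
    have hZ0 : sawZ n (zseq α β n) ≠ 0 := by linarith
    have hq0' : qseq α β n ≠ 0 := ne_of_gt hq0
    show Tmom 1 n (zseq α β n) * (qseq α β n)^2 / (Tmom 0 n (zseq α β n) * (qseq α β n)^1)
        * ((α * (n:ℝ)^(-β)) / qseq α β n)
      = sawMean n (zseq α β n) * (α * (n:ℝ)^(-β))
    rw [sawMean_eq, Tmom_zero]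
    field_simp
  -- var * u^2 → 1
  have Hvar : Tendsto (fun n : ℕ => sawVar n (zseq α β n) * (α * (n:ℝ)^(-β))^2) atTop (𝓝 1) := by
    have base := ((hA2.div hA0 one_ne_zero).sub
      ((hA1.mul hA1).div (hA0.mul hA0) (by norm_num : (1:ℝ)*1 ≠ 0))).mul (huq.mul huq)
    have : ((2:ℝ)/1 - 1*1/(1*1)) * (1*1) = 1 := by norm_num
    rw [this] at base
    apply Tendsto.congr' ?_ base
    filter_upwards [hev2] with n ⟨hq0, hZ1, hn⟩
    have hZ0 : sawZ n (zseq α β n) ≠ 0 := by linarith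
    have hq0' : qseq α β n ≠ 0 := ne_of_gt hq0
    show (Tmom 2 n (zseq α β n) * (qseq α β n)^3 / (Tmom 0 n (zseq α β n) * (qseq α β n)^1)
        - Tmom 1 n (zseq α β n) * (qseq α β n)^2 * (Tmom 1 n (zseq α β n) * (qseq α β n)^2)
          / (Tmom 0 n (zseq α β n) * (qseq α β n)^1 * (Tmom 0 n (zseq α β n) * (qseq α β n)^1)))
        * ((α * (n:ℝ)^(-β)) / qseq α β n * ((α * (n:ℝ)^(-β)) / qseq α β n))
      = sawVar n (zseq α β n) * (α * (n:ℝ)^(-β))^2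
    rw [sawVar_eq, Tmom_zero]
    field_simp
  constructor
  · rw [Asymptotics.isEquivalent_iff_tendsto_one ?hne]
    case hne =>
      filter_upwards [eventually_ge_atTop 1] with n hn
      have hn0 : (0:ℝ) < n := by exact_mod_cast hn
      positivity
    apply Tendsto.congr' ?_ Hmean
    filter_upwards [eventually_ge_atTop 1] with n hn
    have hn0 : (0:ℝ) < n := by exact_mod_cast hn
    have hb : (0:ℝ) < (n:ℝ)^β := by positivity
    show sawMean n (zseq α β n) * (α * (n:ℝ)^(-β))
        = ((fun n : ℕ => sawMean n (1 / (1 + α * (n : ℝ) ^ (-β)))) /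
            (fun n : ℕ => (n : ℝ) ^ β / α)) n
    simp only [Pi.div_apply]
    rw [show (1:ℝ) / (1 + α * (n : ℝ) ^ (-β)) = zseq α β n from rfl]
    rw [Real.rpow_neg hn0.le]
    field_simp
    try ring
  · rw [Asymptotics.isEquivalent_iff_tendsto_one ?hne2]
    case hne2 =>
      filter_upwards [eventually_ge_atTop 1] with n hn
      have hn0 : (0:ℝ) < n := by exact_mod_cast hn
      positivity
    apply Tendsto.congr' ?_ Hvar
    filter_upwards [eventually_ge_atTop 1] with n hn
    have hn0 : (0:ℝ) < n := by exact_mod_cast hn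
    have hb : (0:ℝ) < (n:ℝ)^β := by positivity
    have hb2 : (0:ℝ) < (n:ℝ)^(2*β) := by positivity
    have hrw : ((n:ℝ)^(-β))^2 = ((n:ℝ)^(2*β))⁻¹ := by
      rw [← Real.rpow_natCast ((n:ℝ)^(-β)) 2, ← Real.rpow_mul hn0.le, ← Real.rpow_neg hn0.le]
      congr 1
      push_cast
      ring
    show sawVar n (zseq α β n) * (α * (n:ℝ)^(-β))^2
        = ((fun n : ℕ => sawVar n (1 / (1 + α * (n : ℝ) ^ (-β)))) /
            (fun n : ℕ => (n : ℝ) ^ (2*β) / α ^ 2)) n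
    simp only [Pi.div_apply]
    rw [show (1:ℝ) / (1 + α * (n : ℝ) ^ (-β)) = zseq α β n from rfl]
    rw [mul_pow, hrw]
    field_simp
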